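/- Under the null hypothesis of mutual independence of the components of X and the MCAR mechanism, for each fixed n ≥ 4 the sequence {Y_{n,k}, F_{n,k} : 2 ≤ k ≤ d} is a martingale difference array; that is, Y_{n,k} is F_{n,k}-measurable and E(Y_{n,k} | F_{n,k−1}) = 0 almost surely for every k. -/

import Mathlib

open MeasureTheory ProbabilityTheory Filter Finset

namespace KendallMissing

/-- Setup: `X i k` is the `k`-th component of the `i`-th observation, `R i k` the
corresponding response (missingness) indicator with `P(R i k = 1) = q k` (MCAR,
Bernoulli, independent across cells and of the data).  Under the null hypothesis `H₀`
of total (mutual) independence of the components, together with the i.i.d. sampling,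
the whole family `{X i k} ∪ {R i k}` is mutually independent, the `X i k` are
identically distributed in `i`, and the marginals are continuous (atomless). -/
structure Setup {Ω : Type*} [MeasurableSpace Ω] (μ : Measure Ω)
    (X R : ℕ → ℕ → Ω → ℝ) (q : ℕ → ℝ) : Prop where
  isProb : IsProbabilityMeasure μ
  measX : ∀ i k, Measurable (X i k)
  measR : ∀ i k, Measurable (R i k)
  indep : iIndepFun
      (fun (p : (ℕ × ℕ) × Bool) => if p.2 then R p.1.1 p.1.2 else X p.1.1 p.1.2) μ
  identX : ∀ i k, μ.map (X i k) = μ.map (X 0 k)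
  contX : ∀ i k (x : ℝ), μ {ω | X i k ω = x} = 0
  Rval : ∀ i k ω, R i k ω = 0 ∨ R i k ω = 1
  Rq : ∀ i k, μ {ω | R i k ω = 1} = ENNReal.ofReal (q k)
  q_nonneg : ∀ k, 0 ≤ q k
  q_le_one : ∀ k, q k ≤ 1

variable {Ω : Type*} [MeasurableSpace Ω]

/-- Expectation of a real random variable. -/
noncomputable def mean (μ : Measure Ω) (f : Ω → ℝ) : ℝ := ∫ ω, f ω ∂μ

/-- Variance of a real random variable. -/
noncomputable def var (μ : Measure Ω) (f : Ω → ℝ) : ℝ :=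
  ∫ ω, (f ω - mean μ f) ^ 2 ∂μ

/-- Covariance of two real random variables. -/
noncomputable def cov (μ : Measure Ω) (f g : Ω → ℝ) : ℝ :=
  ∫ ω, (f ω - mean μ f) * (g ω - mean μ g) ∂μ

/-- Completeness indicator `S i = ∏_{k<d} R i k` of the `i`-th observation. -/
noncomputable def Scomp (R : ℕ → ℕ → Ω → ℝ) (d i : ℕ) (ω : Ω) : ℝ :=
  ∏ k ∈ range d, R i k ω

/-- Complete-case Kendall tau `τ_kl^cc`. -/
noncomputable def tauCC (X R : ℕ → ℕ → Ω → ℝ) (n d k l : ℕ) (ω : Ω) : ℝ :=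
  2 / ((n : ℝ) * ((n : ℝ) - 1)) *
    ∑ i ∈ range n, ∑ j ∈ range i,
      Real.sign (X i k ω - X j k ω) * Real.sign (X i l ω - X j l ω) *
        (Scomp R d i ω * Scomp R d j ω)

/-- Complete-case test statistic `T_nd^cc = Σ_{l<k<d} (τ_kl^cc)²`. -/
noncomputable def TCC (X R : ℕ → ℕ → Ω → ℝ) (n d : ℕ) (ω : Ω) : ℝ :=
  ∑ k ∈ range d, ∑ l ∈ range k, (tauCC X R n d k l ω) ^ 2

/-- Pairwise (cell-wise) Kendall tau `τ̃_kl`. -/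
noncomputable def tauP (X R : ℕ → ℕ → Ω → ℝ) (n k l : ℕ) (ω : Ω) : ℝ :=
  2 / ((n : ℝ) * ((n : ℝ) - 1)) *
    ∑ i ∈ range n, ∑ j ∈ range i,
      Real.sign (X i k ω - X j k ω) * Real.sign (X i l ω - X j l ω) *
        (R i k ω * R j k ω * R i l ω * R j l ω)

/-- Pairwise test statistic `T̃_nd = Σ_{l<k<d} τ̃_kl²`. -/
noncomputable def Ttilde (X R : ℕ → ℕ → Ω → ℝ) (n d : ℕ) (ω : Ω) : ℝ :=
  ∑ k ∈ range d, ∑ l ∈ range k, (tauP X R n k l ω) ^ 2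

/-- The kernel `f_k(i,j) = sgn(X_ik - X_jk) R_ik R_jk`. -/
noncomputable def fker (X R : ℕ → ℕ → Ω → ℝ) (k i j : ℕ) (ω : Ω) : ℝ :=
  Real.sign (X i k ω - X j k ω) * (R i k ω * R j k ω)

/-- The `U`-statistic
`U_kl = (n(n-1)(n-2)(n-3))⁻¹ Σ_{i₁≠i₂≠i₃≠i₄} f_k(i₁,i₂) f_l(i₁,i₂) f_k(i₃,i₄) f_l(i₃,i₄)`,
the sum being over quadruples of pairwise distinct indices. -/
noncomputable def Ustat (X R : ℕ → ℕ → Ω → ℝ) (n k l : ℕ) (ω : Ω) : ℝ :=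
  (1 / ((n : ℝ) * ((n : ℝ) - 1) * ((n : ℝ) - 2) * ((n : ℝ) - 3))) *
    ∑ i1 ∈ range n, ∑ i2 ∈ range n, ∑ i3 ∈ range n, ∑ i4 ∈ range n,
      if i1 ≠ i2 ∧ i1 ≠ i3 ∧ i1 ≠ i4 ∧ i2 ≠ i3 ∧ i2 ≠ i4 ∧ i3 ≠ i4 then
        fker X R k i1 i2 ω * fker X R l i1 i2 ω * fker X R k i3 i4 ω * fker X R l i3 i4 ω
      else 0

/-- The `U`-statistic based test statistic `T̂_nd = Σ_{l<k<d} U_kl`. -/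
noncomputable def That (X R : ℕ → ℕ → Ω → ℝ) (n d : ℕ) (ω : Ω) : ℝ :=
  ∑ k ∈ range d, ∑ l ∈ range k, Ustat X R n k l ω

/-- The martingale-difference summands `Y_{n,k} = (2/√Var(T̂_nd)) Σ_{l<k} U_kl`. -/
noncomputable def Y (μ : Measure Ω) (X R : ℕ → ℕ → Ω → ℝ) (n d k : ℕ) (ω : Ω) : ℝ :=
  (2 / Real.sqrt (var μ (That X R n d))) * ∑ l ∈ range k, Ustat X R n k l ω

/-- The σ-field `F_{m,t} = σ{(X i j, R i j) : i < m, j < t}` (0-indexed). -/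
def Fsig (X R : ℕ → ℕ → Ω → ℝ) (m t : ℕ) : MeasurableSpace Ω :=
  ⨆ i ∈ Finset.range m, ⨆ j ∈ Finset.range t,
    (MeasurableSpace.comap (X i j) inferInstance ⊔ MeasurableSpace.comap (R i j) inferInstance)

end KendallMissing


namespace KendallMissing

set_option linter.unusedSectionVars false

section Aux

variable {Ω : Type*} [MeasurableSpace Ω] {μ : Measure Ω} {X R : ℕ → ℕ → Ω → ℝ} {q : ℕ → ℝ}

lemma measurable_realSign : Measurable Real.sign := by
  have : Real.sign = fun r : ℝ => if r < 0 then (-1 : ℝ) else if 0 < r then 1 else 0 := rfl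
  rw [this]
  exact Measurable.ite (measurableSet_lt measurable_id measurable_const) measurable_const
    (Measurable.ite (measurableSet_lt measurable_const measurable_id) measurable_const
      measurable_const)

lemma abs_realSign_le_one (x : ℝ) : |Real.sign x| ≤ 1 := by
  rcases Real.sign_apply_eq x with h | h | h <;> rw [h] <;> norm_num

/-- The indexed family of all cell variables. -/
def fam (X R : ℕ → ℕ → Ω → ℝ) (p : (ℕ × ℕ) × Bool) : Ω → ℝ :=
  if p.2 then R p.1.1 p.1.2 else X p.1.1 p.1.2

lemma fam_false (i j : ℕ) : fam X R ((i, j), false) = X i j := rfl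

lemma fam_true (i j : ℕ) : fam X R ((i, j), true) = R i j := rfl

lemma Setup.meas_fam (hs : Setup μ X R q) (p : (ℕ × ℕ) × Bool) : Measurable (fam X R p) := by
  rcases p with ⟨⟨i, j⟩, b⟩
  cases b
  · exact hs.measX i j
  · exact hs.measR i j

/-- σ-algebra generated by a set of cells. -/
def Msig (X R : ℕ → ℕ → Ω → ℝ) (S : Set ((ℕ × ℕ) × Bool)) : MeasurableSpace Ω :=
  ⨆ p ∈ S, MeasurableSpace.comap (fam X R p) inferInstance

lemma Setup.Msig_le (hs : Setup μ X R q) (S : Set ((ℕ × ℕ) × Bool)) :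
    Msig X R S ≤ ‹MeasurableSpace Ω› :=
  iSup₂_le fun p _ => (hs.meas_fam p).comap_le

lemma comap_le_Msig {S : Set ((ℕ × ℕ) × Bool)} {p : (ℕ × ℕ) × Bool} (hp : p ∈ S) :
    MeasurableSpace.comap (fam X R p) inferInstance ≤ Msig X R S := by
  simp only [Msig]
  exact le_iSup₂ (f := fun p (_ : p ∈ S) =>
    MeasurableSpace.comap (fam X R p) (inferInstance : MeasurableSpace ℝ)) p hp

lemma measurable_fam_Msig {S : Set ((ℕ × ℕ) × Bool)} {p : (ℕ × ℕ) × Bool} (hp : p ∈ S) :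
    Measurable[Msig X R S] (fam X R p) :=
  measurable_iff_comap_le.2 (comap_le_Msig hp)

lemma Setup.indep_Msig (hs : Setup μ X R q) {S T : Set ((ℕ × ℕ) × Bool)} (hST : Disjoint S T) :
    Indep (Msig X R S) (Msig X R T) μ :=
  indep_iSup_of_disjoint (fun p => (hs.meas_fam p).comap_le) hs.indep.iIndep hST

lemma Setup.indepFun_Msig (hs : Setup μ X R q) {S T : Set ((ℕ × ℕ) × Bool)} (hST : Disjoint S T)
    {A B : Ω → ℝ} (hA : Measurable[Msig X R S] A) (hB : Measurable[Msig X R T] B) :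
    IndepFun A B μ :=
  indep_of_indep_of_le_right (indep_of_indep_of_le_left (hs.indep_Msig hST) hA.comap_le)
    hB.comap_le

lemma Fsig_eq (X R : ℕ → ℕ → Ω → ℝ) (m t : ℕ) :
    Fsig X R m t = Msig X R {p : (ℕ × ℕ) × Bool | p.1.1 < m ∧ p.1.2 < t} := by
  apply le_antisymm
  · refine iSup₂_le fun i hi => iSup₂_le fun j hj => sup_le ?_ ?_
    · exact comap_le_Msig (p := ⟨⟨i, j⟩, false⟩)
        ⟨Finset.mem_range.1 hi, Finset.mem_range.1 hj⟩
    · exact comap_le_Msig (p := ⟨⟨i, j⟩, true⟩)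
        ⟨Finset.mem_range.1 hi, Finset.mem_range.1 hj⟩
  · refine iSup₂_le fun p hp => ?_
    rcases p with ⟨⟨i, j⟩, b⟩
    rcases hp with ⟨hi, hj⟩
    have h2 : (MeasurableSpace.comap (X i j) inferInstance
        ⊔ MeasurableSpace.comap (R i j) inferInstance) ≤ Fsig X R m t :=
      le_trans
        (le_iSup₂ (f := fun j' (_ : j' ∈ Finset.range t) =>
            MeasurableSpace.comap (X i j') inferInstance
              ⊔ MeasurableSpace.comap (R i j') inferInstance) j (Finset.mem_range.2 hj))
        (le_iSup₂ (f := fun i' (_ : i' ∈ Finset.range m) =>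
            ⨆ j' ∈ Finset.range t, (MeasurableSpace.comap (X i' j') inferInstance
              ⊔ MeasurableSpace.comap (R i' j') inferInstance)) i (Finset.mem_range.2 hi))
    cases b
    · exact le_trans le_sup_left h2
    · exact le_trans le_sup_right h2

lemma Setup.Fsig_le (hs : Setup μ X R q) (m t : ℕ) :
    Fsig X R m t ≤ ‹MeasurableSpace Ω› := by
  rw [Fsig_eq]; exact hs.Msig_le _

lemma measurable_fker_Msig {S : Set ((ℕ × ℕ) × Bool)} {k i j : ℕ}
    (h1 : ((⟨⟨i, k⟩, false⟩ : (ℕ × ℕ) × Bool) ∈ S) := by simp)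
    (h2 : ((⟨⟨j, k⟩, false⟩ : (ℕ × ℕ) × Bool) ∈ S) := by simp)
    (h3 : ((⟨⟨i, k⟩, true⟩ : (ℕ × ℕ) × Bool) ∈ S) := by simp)
    (h4 : ((⟨⟨j, k⟩, true⟩ : (ℕ × ℕ) × Bool) ∈ S) := by simp) :
    Measurable[Msig X R S] (fker X R k i j) := by
  have hXi := measurable_fam_Msig (X := X) (R := R) h1
  have hXj := measurable_fam_Msig (X := X) (R := R) h2
  have hRi := measurable_fam_Msig (X := X) (R := R) h3
  have hRj := measurable_fam_Msig (X := X) (R := R) h4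
  rw [fam_false] at hXi hXj
  rw [fam_true] at hRi hRj
  exact (measurable_realSign.comp (hXi.sub hXj)).mul (hRi.mul hRj)

lemma measurable_fker_Fsig {m t k i j : ℕ} (hi : i < m) (hj : j < m) (hk : k < t) :
    Measurable[Fsig X R m t] (fker X R k i j) := by
  rw [Fsig_eq]
  exact measurable_fker_Msig ⟨hi, hk⟩ ⟨hj, hk⟩ ⟨hi, hk⟩ ⟨hj, hk⟩

lemma measurable_Ustat_Fsig {m t n k l : ℕ} (hn : n ≤ m) (hk : k < t) (hl : l < t) :
    Measurable[Fsig X R m t] (Ustat X R n k l) := by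
  unfold Ustat
  refine Measurable.const_mul ?_ _
  refine Finset.measurable_sum _ fun i1 hi1 => ?_
  refine Finset.measurable_sum _ fun i2 hi2 => ?_
  refine Finset.measurable_sum _ fun i3 hi3 => ?_
  refine Finset.measurable_sum _ fun i4 hi4 => ?_
  split_ifs with h
  · have h1 : i1 < m := lt_of_lt_of_le (Finset.mem_range.1 hi1) hn
    have h2 : i2 < m := lt_of_lt_of_le (Finset.mem_range.1 hi2) hn
    have h3 : i3 < m := lt_of_lt_of_le (Finset.mem_range.1 hi3) hn
    have h4 : i4 < m := lt_of_lt_of_le (Finset.mem_range.1 hi4) hn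
    exact (((measurable_fker_Fsig h1 h2 hk).mul (measurable_fker_Fsig h1 h2 hl)).mul
      (measurable_fker_Fsig h3 h4 hk)).mul (measurable_fker_Fsig h3 h4 hl)
  · exact measurable_const

lemma Setup.abs_R_le_one (hs : Setup μ X R q) (i k : ℕ) (ω : Ω) : |R i k ω| ≤ 1 := by
  rcases hs.Rval i k ω with h | h <;> rw [h] <;> norm_num

lemma Setup.abs_fker_le_one (hs : Setup μ X R q) (k i j : ℕ) (ω : Ω) :
    |fker X R k i j ω| ≤ 1 := by
  have h1 := abs_realSign_le_one (X i k ω - X j k ω)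
  have h2 := hs.abs_R_le_one i k ω
  have h3 := hs.abs_R_le_one j k ω
  have n1 := abs_nonneg (Real.sign (X i k ω - X j k ω))
  have n2 := abs_nonneg (R i k ω)
  have n3 := abs_nonneg (R j k ω)
  rw [fker, abs_mul, abs_mul]
  calc |Real.sign (X i k ω - X j k ω)| * (|R i k ω| * |R j k ω|) ≤ 1 * (1 * 1) := by
        gcongr
    _ = 1 := by ring

lemma abs_mul4_le_one {a b c d : ℝ} (ha : |a| ≤ 1) (hb : |b| ≤ 1) (hc : |c| ≤ 1)
    (hd : |d| ≤ 1) : |a * b * c * d| ≤ 1 := by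
  rw [abs_mul, abs_mul, abs_mul]
  calc |a| * |b| * |c| * |d| ≤ 1 * 1 * 1 * 1 := by
        gcongr <;> positivity
    _ = 1 := by ring

lemma Setup.integrable_of_bound (hs : Setup μ X R q) {f : Ω → ℝ} (hf : Measurable f)
    (C : ℝ) (h : ∀ ω, |f ω| ≤ C) : Integrable f μ := by
  haveI := hs.isProb
  exact (integrable_const C).mono' hf.aestronglyMeasurable
    (Filter.Eventually.of_forall (by simpa [Real.norm_eq_abs] using h))

lemma Setup.meas_fker (hs : Setup μ X R q) (k i j : ℕ) : Measurable (fker X R k i j) :=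
  (measurable_realSign.comp ((hs.measX i k).sub (hs.measX j k))).mul
    ((hs.measR i k).mul (hs.measR j k))

lemma Setup.integrable_fker (hs : Setup μ X R q) (k i j : ℕ) :
    Integrable (fker X R k i j) μ :=
  hs.integrable_of_bound (hs.meas_fker k i j) 1 (hs.abs_fker_le_one k i j)

lemma Setup.integral_sign_zero (hs : Setup μ X R q) {i j : ℕ} (k : ℕ) (hij : i ≠ j) :
    ∫ ω, Real.sign (X i k ω - X j k ω) ∂μ = 0 := by
  haveI := hs.isProb
  set ν := μ.map (X 0 k) with hν
  have hA := hs.measX i k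
  have hB := hs.measX j k
  have hind : IndepFun (X i k) (X j k) μ := by
    refine hs.indepFun_Msig (S := {(⟨⟨i, k⟩, false⟩ : (ℕ × ℕ) × Bool)})
      (T := {(⟨⟨j, k⟩, false⟩ : (ℕ × ℕ) × Bool)}) ?_ ?_ ?_
    · simp [Set.disjoint_singleton, hij]
    · exact fam_false (X := X) (R := R) i k ▸ measurable_fam_Msig rfl
    · exact fam_false (X := X) (R := R) j k ▸ measurable_fam_Msig rfl
  have hmap : μ.map (fun ω => (X i k ω, X j k ω)) = ν.prod ν := by
    rw [(indepFun_iff_map_prod_eq_prod_map_map hA.aemeasurable hB.aemeasurable).1 hind,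
      hs.identX i k, hs.identX j k]
  have hmeas : Measurable fun p : ℝ × ℝ => Real.sign (p.1 - p.2) :=
    measurable_realSign.comp (measurable_fst.sub measurable_snd)
  have hint : ∫ ω, Real.sign (X i k ω - X j k ω) ∂μ
      = ∫ p : ℝ × ℝ, Real.sign (p.1 - p.2) ∂(ν.prod ν) := by
    rw [← hmap, integral_map (hA.prodMk hB).aemeasurable hmeas.aestronglyMeasurable]
  have hswap : ∫ p : ℝ × ℝ, Real.sign (p.1 - p.2) ∂(ν.prod ν)
      = - ∫ p : ℝ × ℝ, Real.sign (p.1 - p.2) ∂(ν.prod ν) := by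
    conv_lhs => rw [← Measure.prod_swap]
    rw [integral_map measurable_swap.aemeasurable hmeas.aestronglyMeasurable, ← integral_neg]
    congr 1
    funext p
    have : (p.swap.1 - p.swap.2 : ℝ) = -(p.1 - p.2) := by simp
    rw [this, Real.sign_neg]
  rw [hint]
  linarith [hswap]

lemma Setup.integral_fker_zero (hs : Setup μ X R q) {k i j : ℕ} (hij : i ≠ j) :
    ∫ ω, fker X R k i j ω ∂μ = 0 := by
  haveI := hs.isProb
  have hind : IndepFun (fun ω => Real.sign (X i k ω - X j k ω))
      (fun ω => R i k ω * R j k ω) μ := by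
    refine hs.indepFun_Msig
      (S := {(⟨⟨i, k⟩, false⟩ : (ℕ × ℕ) × Bool), ⟨⟨j, k⟩, false⟩})
      (T := {(⟨⟨i, k⟩, true⟩ : (ℕ × ℕ) × Bool), ⟨⟨j, k⟩, true⟩}) ?_ ?_ ?_
    · rw [Set.disjoint_left]
      intro p hp hq
      simp only [Set.mem_insert_iff, Set.mem_singleton_iff] at hp hq
      rcases hp with rfl | rfl <;> rcases hq with hq | hq <;> simp_all
    · have hXi := measurable_fam_Msig (X := X) (R := R)
        (S := {(⟨⟨i, k⟩, false⟩ : (ℕ × ℕ) × Bool), ⟨⟨j, k⟩, false⟩})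
        (p := ⟨⟨i, k⟩, false⟩) (by simp)
      have hXj := measurable_fam_Msig (X := X) (R := R)
        (S := {(⟨⟨i, k⟩, false⟩ : (ℕ × ℕ) × Bool), ⟨⟨j, k⟩, false⟩})
        (p := ⟨⟨j, k⟩, false⟩) (by simp)
      rw [fam_false] at hXi hXj
      exact measurable_realSign.comp (hXi.sub hXj)
    · have hRi := measurable_fam_Msig (X := X) (R := R)
        (S := {(⟨⟨i, k⟩, true⟩ : (ℕ × ℕ) × Bool), ⟨⟨j, k⟩, true⟩})
        (p := ⟨⟨i, k⟩, true⟩) (by simp)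
      have hRj := measurable_fam_Msig (X := X) (R := R)
        (S := {(⟨⟨i, k⟩, true⟩ : (ℕ × ℕ) × Bool), ⟨⟨j, k⟩, true⟩})
        (p := ⟨⟨j, k⟩, true⟩) (by simp)
      rw [fam_true] at hRi hRj
      exact hRi.mul hRj
  have hprod : fker X R k i j = (fun ω => Real.sign (X i k ω - X j k ω))
      * (fun ω => R i k ω * R j k ω) := rfl
  have hintA : Integrable (fun ω => Real.sign (X i k ω - X j k ω)) μ :=
    hs.integrable_of_bound (measurable_realSign.comp ((hs.measX i k).sub (hs.measX j k))) 1
      fun ω => abs_realSign_le_one _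
  have hintB : Integrable (fun ω => R i k ω * R j k ω) μ := by
    refine hs.integrable_of_bound ((hs.measR i k).mul (hs.measR j k)) 1 fun ω => ?_
    rw [abs_mul]
    calc |R i k ω| * |R j k ω| ≤ 1 * 1 := by
          gcongr <;> first | positivity | exact hs.abs_R_le_one _ _ _
      _ = 1 := by ring
  have := hind.integral_mul_eq_mul_integral hintA.aestronglyMeasurable hintB.aestronglyMeasurable
  calc ∫ ω, fker X R k i j ω ∂μ
      = ∫ ω, ((fun ω => Real.sign (X i k ω - X j k ω))
        * (fun ω => R i k ω * R j k ω)) ω ∂μ := by rw [← hprod]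
    _ = (∫ ω, Real.sign (X i k ω - X j k ω) ∂μ) * ∫ ω, R i k ω * R j k ω ∂μ := this
    _ = 0 := by rw [hs.integral_sign_zero k hij, zero_mul]


lemma abs_mul_le_one {a b : ℝ} (ha : |a| ≤ 1) (hb : |b| ≤ 1) : |a * b| ≤ 1 := by
  rw [abs_mul]; exact mul_le_one₀ ha (abs_nonneg b) hb

/-- A single summand of the `U`-statistic, as a function of the quadruple of indices. -/
noncomputable def quadTerm (X R : ℕ → ℕ → Ω → ℝ) (k l : ℕ) (v : (ℕ × ℕ) × ℕ × ℕ)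
    (ω : Ω) : ℝ :=
  if v.1.1 ≠ v.1.2 ∧ v.1.1 ≠ v.2.1 ∧ v.1.1 ≠ v.2.2 ∧ v.1.2 ≠ v.2.1 ∧ v.1.2 ≠ v.2.2
      ∧ v.2.1 ≠ v.2.2 then
    fker X R k v.1.1 v.1.2 ω * fker X R l v.1.1 v.1.2 ω * fker X R k v.2.1 v.2.2 ω
      * fker X R l v.2.1 v.2.2 ω
  else 0

lemma Ustat_eq (X R : ℕ → ℕ → Ω → ℝ) (n k l : ℕ) :
    Ustat X R n k l = (1 / ((n : ℝ) * ((n : ℝ) - 1) * ((n : ℝ) - 2) * ((n : ℝ) - 3))) •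
      ∑ v ∈ (Finset.range n ×ˢ Finset.range n) ×ˢ Finset.range n ×ˢ Finset.range n,
        quadTerm X R k l v := by
  funext ω
  simp only [Ustat, quadTerm, Pi.smul_apply, Finset.sum_apply, Finset.sum_product,
    smul_eq_mul]

lemma Setup.meas_quadTerm (hs : Setup μ X R q) (k l : ℕ) (v : (ℕ × ℕ) × ℕ × ℕ) :
    Measurable (quadTerm X R k l v) := by
  unfold quadTerm
  split_ifs with h
  · exact (((hs.meas_fker _ _ _).mul (hs.meas_fker _ _ _)).mul (hs.meas_fker _ _ _)).mul
      (hs.meas_fker _ _ _)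
  · exact measurable_const

lemma Setup.abs_quadTerm_le_one (hs : Setup μ X R q) (k l : ℕ) (v : (ℕ × ℕ) × ℕ × ℕ)
    (ω : Ω) : |quadTerm X R k l v ω| ≤ 1 := by
  unfold quadTerm
  split_ifs with h
  · exact abs_mul4_le_one (hs.abs_fker_le_one _ _ _ _) (hs.abs_fker_le_one _ _ _ _)
      (hs.abs_fker_le_one _ _ _ _) (hs.abs_fker_le_one _ _ _ _)
  · norm_num

lemma Setup.integrable_quadTerm (hs : Setup μ X R q) (k l : ℕ) (v : (ℕ × ℕ) × ℕ × ℕ) :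
    Integrable (quadTerm X R k l v) μ :=
  hs.integrable_of_bound (hs.meas_quadTerm k l v) 1 (hs.abs_quadTerm_le_one k l v)

lemma Setup.condexp_quadTerm (hs : Setup μ X R q) {n k l : ℕ} (hlk : l < k)
    {v : (ℕ × ℕ) × ℕ × ℕ}
    (hv : v ∈ (Finset.range n ×ˢ Finset.range n) ×ˢ Finset.range n ×ˢ Finset.range n) :
    μ[quadTerm X R k l v | Fsig X R n k] =ᵐ[μ] 0 := by
  haveI := hs.isProb
  obtain ⟨⟨a, b⟩, c, d⟩ := v
  simp only [Finset.mem_product, Finset.mem_range] at hv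
  obtain ⟨⟨ha, hb⟩, hc, hd⟩ := hv
  by_cases hdist : a ≠ b ∧ a ≠ c ∧ a ≠ d ∧ b ≠ c ∧ b ≠ d ∧ c ≠ d
  swap
  · have hz : quadTerm X R k l ((a, b), c, d) = 0 := by
      funext ω; unfold quadTerm; rw [if_neg hdist]; rfl
    rw [hz, condExp_zero]
  obtain ⟨hab, hac, had, hbc, hbd, hcd⟩ := hdist
  set gq : Ω → ℝ := fun ω => fker X R l a b ω * fker X R l c d ω with hgqdef
  set hq : Ω → ℝ := fun ω => fker X R k a b ω * fker X R k c d ω with hhqdef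
  have hsplit : quadTerm X R k l ((a, b), c, d) = gq * hq := by
    funext ω
    unfold quadTerm
    rw [if_pos ⟨hab, hac, had, hbc, hbd, hcd⟩]
    simp only [hgqdef, hhqdef, Pi.mul_apply]
    ring
  have hmle : Fsig X R n k ≤ ‹MeasurableSpace Ω› := hs.Fsig_le n k
  have hgq_meas : StronglyMeasurable[Fsig X R n k] gq :=
    ((measurable_fker_Fsig ha hb hlk).mul (measurable_fker_Fsig hc hd hlk)).stronglyMeasurable
  have hq_meas_col : Measurable[Msig X R {p : (ℕ × ℕ) × Bool | p.1.2 = k}] hq :=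
    (measurable_fker_Msig (S := {p : (ℕ × ℕ) × Bool | p.1.2 = k}) rfl rfl rfl rfl).mul
      (measurable_fker_Msig (S := {p : (ℕ × ℕ) × Bool | p.1.2 = k}) rfl rfl rfl rfl)
  have hint_hq : Integrable hq μ :=
    hs.integrable_of_bound ((hs.meas_fker k a b).mul (hs.meas_fker k c d)) 1
      fun ω => abs_mul_le_one (hs.abs_fker_le_one _ _ _ _) (hs.abs_fker_le_one _ _ _ _)
  have hint_prod : Integrable (gq * hq) μ := by
    refine hs.integrable_of_bound (((hs.meas_fker l a b).mul (hs.meas_fker l c d)).mul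
      ((hs.meas_fker k a b).mul (hs.meas_fker k c d))) 1 fun ω => ?_
    exact abs_mul_le_one
      (abs_mul_le_one (hs.abs_fker_le_one _ _ _ _) (hs.abs_fker_le_one _ _ _ _))
      (abs_mul_le_one (hs.abs_fker_le_one _ _ _ _) (hs.abs_fker_le_one _ _ _ _))
  have hpull := condExp_mul_of_stronglyMeasurable_left hgq_meas hint_prod hint_hq
  have hcond : μ[hq | Fsig X R n k] =ᵐ[μ] fun _ => ∫ ω, hq ω ∂μ := by
    refine condExp_indep_eq (hs.Msig_le _) hmle hq_meas_col.stronglyMeasurable ?_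
    rw [Fsig_eq]
    refine hs.indep_Msig ?_
    rw [Set.disjoint_left]
    rintro p hp ⟨_, h2⟩
    rw [Set.mem_setOf_eq] at hp
    omega
  have hzero : ∫ ω, hq ω ∂μ = 0 := by
    have hind2 : IndepFun (fker X R k a b) (fker X R k c d) μ := by
      refine hs.indepFun_Msig
        (S := {p : (ℕ × ℕ) × Bool | (p.1.1 = a ∨ p.1.1 = b) ∧ p.1.2 = k})
        (T := {p : (ℕ × ℕ) × Bool | (p.1.1 = c ∨ p.1.1 = d) ∧ p.1.2 = k}) ?_ ?_ ?_
      · rw [Set.disjoint_left]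
        rintro p ⟨h1, _⟩ ⟨h2, _⟩
        rcases h1 with e1 | e1 <;> rcases h2 with e2 | e2 <;> omega
      · exact measurable_fker_Msig ⟨Or.inl rfl, rfl⟩ ⟨Or.inr rfl, rfl⟩ ⟨Or.inl rfl, rfl⟩
          ⟨Or.inr rfl, rfl⟩
      · exact measurable_fker_Msig ⟨Or.inl rfl, rfl⟩ ⟨Or.inr rfl, rfl⟩ ⟨Or.inl rfl, rfl⟩
          ⟨Or.inr rfl, rfl⟩
    have hmul := hind2.integral_mul_eq_mul_integral (hs.integrable_fker k a b).aestronglyMeasurable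
      (hs.integrable_fker k c d).aestronglyMeasurable
    calc ∫ ω, hq ω ∂μ = ∫ ω, (fker X R k a b * fker X R k c d) ω ∂μ := rfl
      _ = (∫ ω, fker X R k a b ω ∂μ) * ∫ ω, fker X R k c d ω ∂μ := hmul
      _ = 0 := by rw [hs.integral_fker_zero hab, zero_mul]
  rw [hsplit]
  filter_upwards [hpull, hcond] with ω h1 h2
  simp only [Pi.zero_apply, h1, Pi.mul_apply, h2, hzero, mul_zero]

lemma Setup.condexp_Ustat (hs : Setup μ X R q) {n k l : ℕ} (hlk : l < k) :
    μ[Ustat X R n k l | Fsig X R n k] =ᵐ[μ] 0 := by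
  haveI := hs.isProb
  rw [Ustat_eq]
  set c' : ℝ := 1 / ((n : ℝ) * ((n : ℝ) - 1) * ((n : ℝ) - 2) * ((n : ℝ) - 3)) with hc'
  set V := (Finset.range n ×ˢ Finset.range n) ×ˢ Finset.range n ×ˢ Finset.range n with hV
  have h2 := condExp_smul (μ := μ) (m := Fsig X R n k) c' (∑ v ∈ V, quadTerm X R k l v)
  have h1 := condExp_finsetSum (μ := μ) (m := Fsig X R n k)
    (fun v (_ : v ∈ V) => hs.integrable_quadTerm k l v)
  have h3 : ∀ᵐ ω ∂μ, ∀ v ∈ V, (μ[quadTerm X R k l v | Fsig X R n k]) ω = 0 := by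
    refine (Filter.eventually_all_finset V).2 fun v hv => ?_
    filter_upwards [hs.condexp_quadTerm hlk hv] with ω hω
    simpa using hω
  filter_upwards [h1, h2, h3] with ω e1 e2 e3
  rw [Pi.zero_apply, e2, Pi.smul_apply, e1, Finset.sum_apply, Finset.sum_eq_zero e3,
    smul_zero]

end Aux

end KendallMissing

namespace KendallMissing

/-- Under `H₀` and MCAR, for each fixed `n ≥ 4` the family
`{Y_{n,k}, F_{n,k}}` is a martingale difference array: `Y_{n,k}` is `F_{n,k}`-measurable
and `E(Y_{n,k} | F_{n,k-1}) = 0` a.s.  (In the 0-indexed formalization, `Y μ X R n d k`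
involves the columns `0,…,k`, so it is measurable w.r.t. `Fsig X R n (k+1)` and has zero
conditional expectation given `Fsig X R n k`.) -/
theorem Y_martingale_difference {Ω : Type*} [MeasurableSpace Ω] (μ : Measure Ω)
    (X R : ℕ → ℕ → Ω → ℝ) (q : ℕ → ℝ) (hs : Setup μ X R q)
    (n d : ℕ) (hn : 4 ≤ n) (k : ℕ) (hk1 : 1 ≤ k) (hkd : k < d) :
    Measurable[Fsig X R n (k + 1)] (Y μ X R n d k) ∧
      μ[Y μ X R n d k | Fsig X R n k] =ᵐ[μ] 0 := by
  haveI := hs.isProb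
  constructor
  · unfold Y
    refine Measurable.const_mul ?_ _
    refine Finset.measurable_sum _ fun l hl => ?_
    exact measurable_Ustat_Fsig le_rfl (Nat.lt_succ_self k)
      (lt_of_lt_of_le (Finset.mem_range.1 hl) (Nat.le_succ k))
  · set c : ℝ := 2 / Real.sqrt (var μ (That X R n d)) with hc
    have hYeq : Y μ X R n d k = c • ∑ l ∈ Finset.range k, Ustat X R n k l := by
      funext ω
      simp only [Y, Pi.smul_apply, Finset.sum_apply, smul_eq_mul, hc]
    rw [hYeq]
    have hint : ∀ l ∈ Finset.range k, Integrable (Ustat X R n k l) μ := by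
      intro l hl
      rw [Ustat_eq]
      exact Integrable.smul (𝕜 := ℝ) _
        (integrable_finset_sum' _ fun v hv => hs.integrable_quadTerm k l v)
    have h1 := condExp_finsetSum (μ := μ) (m := Fsig X R n k) hint
    have h2 := condExp_smul (μ := μ) (m := Fsig X R n k) c
      (∑ l ∈ Finset.range k, Ustat X R n k l)
    have h3 : ∀ᵐ ω ∂μ, ∀ l ∈ Finset.range k,
        (μ[Ustat X R n k l | Fsig X R n k]) ω = 0 := by
      refine (Filter.eventually_all_finset _).2 fun l hl => ?_
      filter_upwards [hs.condexp_Ustat (Finset.mem_range.1 hl)] with ω hω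
      simpa using hω
    filter_upwards [h1, h2, h3] with ω e1 e2 e3
    rw [Pi.zero_apply, e2, Pi.smul_apply, e1, Finset.sum_apply, Finset.sum_eq_zero e3,
      smul_zero]

end KendallMissing
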